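/- arXiv:1709.02766 — 9 statements merged into one kernel-verified Lean document; each statement's English description precedes it below -/
import Mathlib

section
/- If a finitely generated group is linear (embeds into GL_n over a field), then it is residually finite. -/
lemma int_isJacobsonRing : IsJacobsonRing ℤ := by
  rw [isJacobsonRing_iff_prime_eq]
  intro P hP
  rcases eq_or_ne P ⊥ with rfl | hPb
  · refine eq_bot_iff.mpr fun x hx => ?_
    rw [Ideal.mem_jacobson_bot] at hx
    have h1 := hx x
    rw [Ideal.mem_bot]
    rcases Int.isUnit_iff.mp h1 with h | h
    · have : x * x = 0 := by linarith
      exact mul_self_eq_zero.mp this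
    · nlinarith [mul_self_nonneg x]
  · haveI := hP
    haveI := IsPrime.to_maximal_ideal hPb
    exact Ideal.jacobson_eq_self_of_isMaximal

lemma finite_of_field_moduleFinite_int (F : Type*) [Field F] [Module.Finite ℤ F] :
    Finite F := by
  haveI : Algebra.IsIntegral ℤ F := Algebra.IsIntegral.of_finite ℤ F
  rcases CharP.char_is_prime_or_zero F (ringChar F) with hp | h0
  · -- torsion case
    refine Module.finite_of_fg_torsion F fun x => ?_
    refine ⟨⟨(ringChar F : ℤ), mem_nonZeroDivisors_of_ne_zero (by exact_mod_cast hp.ne_zero)⟩, ?_⟩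
    show ((ringChar F : ℤ)) • x = 0
    haveI := ringChar.charP F
    rw [zsmul_eq_mul]
    push_cast
    rw [CharP.cast_eq_zero F (ringChar F), zero_mul]
  · -- char zero impossible
    haveI : CharP F 0 := h0 ▸ ringChar.charP F
    haveI : CharZero F := CharP.charP_to_charZero F
    have hinj : Function.Injective (algebraMap ℤ F) := by
      rw [algebraMap_int_eq]
      exact fun a b hab => Int.cast_injective hab
    exact absurd (isField_of_isIntegral_of_isField hinj (Field.toIsField F)) Int.not_isField

set_option synthInstance.maxHeartbeats 1000000 in
set_option maxHeartbeats 1000000 in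
/-- A finitely generated linear group (one that embeds into `GL n K` for some field `K`)
is residually finite. -/
theorem fg_linear_residually_finite {G : Type*} [Group G] (hfg : Group.FG G)
    (K : Type*) [Field K] (n : ℕ)
    (f : G →* GL (Fin n) K) (hf : Function.Injective f) :
    ∀ g : G, g ≠ 1 →
      ∃ (H : Type) (_ : Group H) (_ : Finite H) (φ : G →* H), φ g ≠ 1 := by
  classical
  intro g hg
  obtain ⟨S, hScl, hSfin⟩ := Group.fg_iff.mp hfg
  set T : Set K := ⋃ s ∈ S,
      (Set.range fun p : Fin n × Fin n => ((f s : Matrix (Fin n) (Fin n) K)) p.1 p.2) ∪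
      (Set.range fun p : Fin n × Fin n =>
        (((f s)⁻¹ : GL (Fin n) K) : Matrix (Fin n) (Fin n) K) p.1 p.2) with hT
  have hTfin : T.Finite := hSfin.biUnion fun s _ => (Set.finite_range _).union (Set.finite_range _)
  set A : Subalgebra ℤ K := Algebra.adjoin ℤ T with hA
  -- every entry of f g and (f g)⁻¹ lies in A
  have key : ∀ g : G, (∀ i j, ((f g : Matrix (Fin n) (Fin n) K)) i j ∈ A) ∧
      (∀ i j, (((f g)⁻¹ : GL (Fin n) K) : Matrix (Fin n) (Fin n) K) i j ∈ A) := by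
    intro x
    have hx : x ∈ Subgroup.closure S := hScl ▸ Subgroup.mem_top x
    induction hx using Subgroup.closure_induction with
    | mem s hs =>
      constructor <;> intro i j
      · exact Algebra.subset_adjoin (Set.mem_biUnion hs (Or.inl ⟨(i, j), rfl⟩))
      · exact Algebra.subset_adjoin (Set.mem_biUnion hs (Or.inr ⟨(i, j), rfl⟩))
    | one =>
      have h1A : ∀ i j, (1 : Matrix (Fin n) (Fin n) K) i j ∈ A := by
        intro i j
        rw [Matrix.one_apply]
        split
        · exact A.one_mem
        · exact A.zero_mem
      refine ⟨fun i j => ?_, fun i j => ?_⟩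
      · rw [map_one, Units.val_one]; exact h1A i j
      · rw [map_one, inv_one, Units.val_one]; exact h1A i j
    | mul a b _ _ ha hb =>
      constructor <;> intro i j
      · rw [map_mul, Units.val_mul, Matrix.mul_apply]
        exact A.sum_mem fun k _ => A.mul_mem (ha.1 i k) (hb.1 k j)
      · rw [map_mul, mul_inv_rev, Units.val_mul, Matrix.mul_apply]
        exact A.sum_mem fun k _ => A.mul_mem (hb.2 i k) (ha.2 k j)
    | inv a _ ha =>
      refine ⟨fun i j => ?_, fun i j => ?_⟩
      · rw [map_inv]; exact ha.2 i j
      · rw [map_inv, inv_inv]; exact ha.1 i j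
  -- the matrices over A
  let M : G → Matrix (Fin n) (Fin n) A := fun x i j => ⟨(f x : Matrix (Fin n) (Fin n) K) i j, (key x).1 i j⟩
  let N : G → Matrix (Fin n) (Fin n) A := fun x i j =>
    ⟨(((f x)⁻¹ : GL (Fin n) K) : Matrix (Fin n) (Fin n) K) i j, (key x).2 i j⟩
  have hone : ∀ i j, (((1 : Matrix (Fin n) (Fin n) A) i j : A) : K)
      = (1 : Matrix (Fin n) (Fin n) K) i j := by
    intro i j
    simp [Matrix.one_apply, apply_ite (fun a : A => (a : K))]
  have hmulc : ∀ (P Q : Matrix (Fin n) (Fin n) A) i j,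
      (((P * Q) i j : A) : K) = ∑ k, (P i k : K) * (Q k j : K) := by
    intro P Q i j
    rw [Matrix.mul_apply]
    push_cast
    rfl
  have hMmul : ∀ a b, M (a * b) = M a * M b := by
    intro a b
    ext i j
    rw [hmulc]
    show (f (a * b) : Matrix (Fin n) (Fin n) K) i j = _
    rw [map_mul, Units.val_mul, Matrix.mul_apply]
  have hMN : ∀ x, M x * N x = 1 := by
    intro x
    ext i j
    rw [hmulc, hone]
    have : ((f x * (f x)⁻¹ : GL (Fin n) K) : Matrix (Fin n) (Fin n) K) i j
        = (1 : Matrix (Fin n) (Fin n) K) i j := by rw [mul_inv_cancel]; rfl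
    rw [Units.val_mul, Matrix.mul_apply] at this
    exact this
  have hNM : ∀ x, N x * M x = 1 := by
    intro x
    ext i j
    rw [hmulc, hone]
    have : (((f x)⁻¹ * f x : GL (Fin n) K) : Matrix (Fin n) (Fin n) K) i j
        = (1 : Matrix (Fin n) (Fin n) K) i j := by rw [inv_mul_cancel]; rfl
    rw [Units.val_mul, Matrix.mul_apply] at this
    exact this
  have hMone : M 1 = 1 := by
    ext i j
    rw [hone]
    show (f 1 : Matrix (Fin n) (Fin n) K) i j = _
    rw [map_one, Units.val_one]
  let ψ : G →* (Matrix (Fin n) (Fin n) A)ˣ :=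
    { toFun := fun x => ⟨M x, N x, hMN x, hNM x⟩
      map_one' := Units.ext hMone
      map_mul' := fun a b => Units.ext (hMmul a b) }
  -- find a nonzero element a of A witnessing f g ≠ 1
  have hfg1 : f g ≠ 1 := fun h => hg (hf (h.trans (map_one f).symm))
  have : ∃ i j, (f g : Matrix (Fin n) (Fin n) K) i j ≠ (1 : Matrix (Fin n) (Fin n) K) i j := by
    by_contra h
    push_neg at h
    exact hfg1 (Units.ext (Matrix.ext h))
  obtain ⟨i, j, hij⟩ := this
  set a : A := M g i j - (1 : Matrix (Fin n) (Fin n) A) i j with ha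
  have ha0 : a ≠ 0 := by
    intro h
    apply hij
    have := congrArg (fun z : A => (z : K)) h
    simp only [ha] at this
    push_cast at this
    rw [hone] at this
    exact sub_eq_zero.mp (by simpa using this)
  -- Jacobson ring structure on A
  haveI : IsJacobsonRing ℤ := int_isJacobsonRing
  haveI hAft : Algebra.FiniteType ℤ A :=
    (Subalgebra.fg_iff_finiteType A).mp ⟨hTfin.toFinset, by rw [Set.Finite.coe_toFinset]⟩
  haveI : IsJacobsonRing A := isJacobsonRing_of_finiteType (A := ℤ)
  -- find a maximal ideal avoiding a
  have hbot : (⊥ : Ideal A).jacobson = ⊥ :=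
    ‹IsJacobsonRing A›.out Ideal.bot_prime.isRadical
  have hnm : a ∉ (⊥ : Ideal A).jacobson := by rw [hbot]; simpa using ha0
  rw [Ideal.jacobson, Ideal.mem_sInf] at hnm
  push_neg at hnm
  obtain ⟨m, hmmem, ham⟩ := hnm
  haveI hm : m.IsMaximal := hmmem.2
  letI : Field (A ⧸ m) := Ideal.Quotient.field m
  -- the residue field is finite
  haveI : Algebra.FiniteType ℤ (A ⧸ m) :=
    Algebra.FiniteType.of_surjective (Ideal.Quotient.mkₐ ℤ m) (Ideal.Quotient.mkₐ_surjective ℤ m)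
  haveI : Module.Finite ℤ (A ⧸ m) := finite_of_finite_type_of_isJacobsonRing ℤ (A ⧸ m)
  haveI : Finite (A ⧸ m) := finite_of_field_moduleFinite_int (A ⧸ m)
  haveI : Finite (Matrix (Fin n) (Fin n) (A ⧸ m))ˣ := inferInstance
  -- the finite quotient
  let φ₀ : G →* (Matrix (Fin n) (Fin n) (A ⧸ m))ˣ :=
    (Units.map ((Ideal.Quotient.mk m).mapMatrix.toMonoidHom)).comp ψ
  have hφ₀ : φ₀ g ≠ 1 := by
    intro h
    apply ham
    have h2 : (Ideal.Quotient.mk m).mapMatrix (M g) = 1 := by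
      have h2' := congrArg Units.val h
      rwa [MonoidHom.comp_apply, Units.coe_map, Units.val_one] at h2'
    have h4 := congrArg (fun P => P i j) h2
    simp only [RingHom.mapMatrix_apply, Matrix.map_apply] at h4
    have h5 : Ideal.Quotient.mk m ((1 : Matrix (Fin n) (Fin n) A) i j)
        = (1 : Matrix (Fin n) (Fin n) (A ⧸ m)) i j := by
      simp [Matrix.one_apply, apply_ite (Ideal.Quotient.mk m)]
    have h6 : Ideal.Quotient.mk m a = 0 := by
      rw [ha, map_sub, h4, h5, sub_self]
    exact Ideal.Quotient.eq_zero_iff_mem.mp h6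
  -- shrink to Type 0
  haveI : Small.{0} (Matrix (Fin n) (Fin n) (A ⧸ m))ˣ := inferInstance
  let me : Shrink.{0} (Matrix (Fin n) (Fin n) (A ⧸ m))ˣ ≃* (Matrix (Fin n) (Fin n) (A ⧸ m))ˣ :=
    Shrink.mulEquiv
  refine ⟨Shrink.{0} (Matrix (Fin n) (Fin n) (A ⧸ m))ˣ, inferInstance, inferInstance,
    me.symm.toMonoidHom.comp φ₀, ?_⟩
  intro h
  apply hφ₀
  have h7 := congrArg me h
  simpa using h7
end

section
/- Every finitely generated commutative ring is residually finite as a ring, i.e., for every nonzero element a there is a ring homomorphism to a finite ring sending a to a nonzero element. -/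
lemma finite_of_field_module_finite_int (k : Type*) [Field k] [Module.Finite ℤ k] :
    Finite k := by
  rcases CharP.char_is_prime_or_zero k (ringChar k) with hp | h0
  · haveI : NeZero (ringChar k) := ⟨hp.ne_zero⟩
    haveI : CharP k (ringChar k) := ringChar.charP k
    letI : Algebra (ZMod (ringChar k)) k := (ZMod.castHom dvd_rfl k).toAlgebra
    haveI : IsScalarTower ℤ (ZMod (ringChar k)) k :=
      IsScalarTower.of_algebraMap_eq' (RingHom.ext_int _ _)
    haveI := Module.Finite.of_restrictScalars_finite ℤ (ZMod (ringChar k)) k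
    exact Module.finite_of_finite (ZMod (ringChar k))
  · haveI : CharP k 0 := h0 ▸ ringChar.charP k
    haveI : CharZero k := CharP.charP_to_charZero k
    haveI : IsScalarTower ℤ ℚ k :=
      IsScalarTower.of_algebraMap_eq' (RingHom.ext_int _ _)
    have hint : IsIntegral ℤ ((algebraMap ℚ k) ((1 : ℚ)/2)) := IsIntegral.of_finite ℤ _
    have h2 : IsIntegral ℤ ((1 : ℚ)/2) :=
      IsIntegral.tower_bot (algebraMap ℚ k).injective hint
    obtain ⟨y, hy⟩ := IsIntegrallyClosed.isIntegral_iff.mp h2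
    have hy' : (y : ℚ) = 1/2 := by simpa using hy
    have h1 : ((2 * y : ℤ) : ℚ) = ((1 : ℤ) : ℚ) := by push_cast [hy']; ring
    have h2' : (2 * y : ℤ) = 1 := by exact_mod_cast h1
    omega

set_option maxHeartbeats 1000000 in
set_option synthInstance.maxHeartbeats 400000 in
/-- Every finitely generated commutative ring is residually finite as a ring:
for every nonzero element `a` there is a ring homomorphism to a finite ring
sending `a` to a nonzero element. -/
theorem fg_commRing_residually_finite {A : Type*} [CommRing A]
    (hfg : Algebra.FiniteType ℤ A) (a : A) (ha : a ≠ 0) :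
    ∃ (B : Type) (_ : CommRing B) (_ : Finite B) (φ : A →+* B), φ a ≠ 0 := by
  classical
  -- Step 1: Zorn's lemma, an ideal maximal with respect to not containing `a`.
  obtain ⟨I, hImem, hImax⟩ :
      ∃ I : Ideal A, a ∉ I ∧ ∀ J : Ideal A, a ∉ J → I ≤ J → J ≤ I := by
    have hz := zorn_le_nonempty₀ {I : Ideal A | a ∉ I} ?_ ⊥ (by simpa using ha)
    · obtain ⟨I, _, hmax⟩ := hz
      exact ⟨I, hmax.1, fun J hJ hIJ => hmax.2 hJ hIJ⟩
    · intro c hc hchain y hy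
      refine ⟨sSup c, ?_, fun z hz => le_sSup hz⟩
      intro hmem
      rw [Submodule.mem_sSup_of_directed ⟨y, hy⟩ hchain.directedOn] at hmem
      obtain ⟨J, hJc, hJ⟩ := hmem
      exact hc hJc hJ
  -- Step 2: pass to the quotient `B`; the image of `a` lies in every nonzero ideal.
  set B := A ⧸ I with hB
  set b : B := Ideal.Quotient.mk I a with hbdef
  have hb : b ≠ 0 := by
    rw [hbdef, Ne, Ideal.Quotient.eq_zero_iff_mem]
    exact hImem
  have key : ∀ J : Ideal B, J ≠ ⊥ → b ∈ J := by
    intro J hJ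
    obtain ⟨x, hxJ, hx0⟩ := Submodule.exists_mem_ne_zero_of_ne_bot hJ
    obtain ⟨x', rfl⟩ := Ideal.Quotient.mk_surjective x
    have hxI : x' ∉ I := fun h => hx0 (Ideal.Quotient.eq_zero_iff_mem.mpr h)
    have haK : a ∈ I ⊔ Ideal.span {x'} := by
      by_contra hnot
      exact hxI ((hImax _ hnot le_sup_left)
        (le_sup_right (α := Ideal A) (Ideal.mem_span_singleton_self x')))
    obtain ⟨i, hi, z, hz, hsum⟩ := Submodule.mem_sup.mp haK
    obtain ⟨c, rfl⟩ := Ideal.mem_span_singleton'.mp hz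
    have hbc : b = Ideal.Quotient.mk I c * Ideal.Quotient.mk I x' := by
      rw [hbdef, ← hsum]
      simp [Ideal.Quotient.eq_zero_iff_mem.mpr hi]
    rw [hbc]
    exact J.mul_mem_left _ hxJ
  -- Step 3: the annihilator `m` of `b` is a maximal ideal.
  set m : Ideal B := (Submodule.span B {b}).annihilator with hmdef
  have hmem_m : ∀ r : B, r ∈ m ↔ r * b = 0 := fun r => by
    rw [hmdef, Submodule.mem_annihilator_span_singleton, smul_eq_mul]
  have hmmax : m.IsMaximal := by
    rw [Ideal.isMaximal_iff]
    constructor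
    · intro h1
      exact hb (by simpa using (hmem_m 1).mp h1)
    · intro J x hmJ hxm hxJ
      have hxb : x * b ≠ 0 := fun h => hxm ((hmem_m x).mpr h)
      have hbmem : b ∈ Ideal.span {x * b} :=
        key _ (by rwa [Ne, Ideal.span_singleton_eq_bot])
      obtain ⟨c, hc⟩ := Ideal.mem_span_singleton'.mp hbmem
      have h1m : (1 : B) - c * x ∈ m := by
        rw [hmem_m]
        calc ((1 : B) - c * x) * b = b - c * (x * b) := by ring
        _ = 0 := by rw [hc]; ring
      have h1 : (1 : B) = ((1 : B) - c * x) + c * x := by ring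
      rw [h1]
      exact J.add_mem (hmJ h1m) (J.mul_mem_left c hxJ)
  haveI := hmmax
  letI : Field (B ⧸ m) := Ideal.Quotient.field m
  -- Step 4: `B` is a noetherian f.g. ℤ-algebra and `B ⧸ m` is a finite field.
  haveI hftB : Algebra.FiniteType ℤ B :=
    Algebra.FiniteType.of_surjective (A := A) (Ideal.Quotient.mkₐ ℤ I)
      (Ideal.Quotient.mkₐ_surjective ℤ I)
  haveI : IsNoetherianRing B := Algebra.FiniteType.isNoetherianRing ℤ B
  haveI : Algebra.FiniteType ℤ (B ⧸ m) :=
    Algebra.FiniteType.of_surjective (A := B) (Ideal.Quotient.mkₐ ℤ m)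
      (Ideal.Quotient.mkₐ_surjective ℤ m)
  haveI : IsJacobsonRing ℤ := int_isJacobsonRing
  haveI : Module.Finite ℤ (B ⧸ m) := finite_of_finite_type_of_isJacobsonRing ℤ (B ⧸ m)
  haveI hkfin : Finite (B ⧸ m) := finite_of_field_module_finite_int _
  -- Step 5: `m` is nilpotent (Krull intersection theorem).
  obtain ⟨n, hn⟩ : ∃ n : ℕ, m ^ n = ⊥ := by
    by_contra hcon
    push_neg at hcon
    have hbmem : b ∈ (⨅ i : ℕ, m ^ i • ⊤ : Submodule B B) := by
      rw [Submodule.mem_iInf]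
      intro i
      have : b ∈ m ^ i := key _ (hcon i)
      simpa [smul_eq_mul, Ideal.mul_top] using this
    obtain ⟨r, hr⟩ := (Ideal.mem_iInf_smul_pow_eq_bot_iff m b).mp hbmem
    rw [smul_eq_mul] at hr
    have h1m : (1 : B) - (r : B) ∈ m := by
      rw [hmem_m, sub_mul, one_mul, hr, sub_self]
    have h1 : (1 : B) ∈ m := by
      have := m.add_mem h1m r.2
      simpa using this
    exact hmmax.ne_top ((Ideal.eq_top_iff_one m).mpr h1)
  -- Step 6: all quotients `B ⧸ m ^ i` are finite, by induction on `i`.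
  have hfinq : ∀ i : ℕ, Finite (B ⧸ (m ^ i : Ideal B)) := by
    intro i
    induction i with
    | zero =>
        have : Subsingleton (B ⧸ (m ^ 0 : Ideal B)) := by
          rw [pow_zero, Ideal.one_eq_top]
          exact Submodule.Quotient.subsingleton_iff.mpr rfl
        exact Finite.of_subsingleton
    | succ i ih =>
        have hle1 : m ^ (i + 1) ≤ m ^ i := Ideal.pow_le_pow_right (Nat.le_succ i)
        have hle2 : m ^ (i + 1) ≤ m := Ideal.pow_le_self (Nat.succ_ne_zero i)
        haveI : IsNoetherianRing (B ⧸ (m ^ (i + 1) : Ideal B)) :=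
          isNoetherianRing_of_surjective B _ (Ideal.Quotient.mk (m ^ (i + 1)))
            Ideal.Quotient.mk_surjective
        set J : Ideal (B ⧸ (m ^ (i + 1) : Ideal B)) :=
          (m ^ i).map (Ideal.Quotient.mk (m ^ (i + 1))) with hJdef
        set m' : Ideal (B ⧸ (m ^ (i + 1) : Ideal B)) :=
          m.map (Ideal.Quotient.mk (m ^ (i + 1))) with hm'def
        haveI hJfg : Module.Finite (B ⧸ (m ^ (i + 1) : Ideal B)) J :=
          Module.Finite.iff_fg.mpr (IsNoetherian.noetherian J)
        have hmul : m' * J = ⊥ := by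
          rw [hm'def, hJdef, ← Ideal.map_mul, ← pow_succ']
          exact Ideal.map_quotient_self _
        have hT : Module.IsTorsionBySet (B ⧸ (m ^ (i + 1) : Ideal B)) J m' := by
          intro x r
          have hmem : (r : B ⧸ (m ^ (i + 1) : Ideal B)) * (x : B ⧸ (m ^ (i + 1) : Ideal B))
              ∈ m' * J := Ideal.mul_mem_mul r.2 x.2
          rw [hmul] at hmem
          exact Subtype.ext (by simpa using hmem)
        letI : Module ((B ⧸ (m ^ (i + 1) : Ideal B)) ⧸ m') J := hT.module
        haveI : IsScalarTower (B ⧸ (m ^ (i + 1) : Ideal B))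
            ((B ⧸ (m ^ (i + 1) : Ideal B)) ⧸ m') J := hT.isScalarTower
        haveI : Module.Finite ((B ⧸ (m ^ (i + 1) : Ideal B)) ⧸ m') J :=
          Module.Finite.of_restrictScalars_finite (B ⧸ (m ^ (i + 1) : Ideal B)) _ _
        have e2 : ((B ⧸ (m ^ (i + 1) : Ideal B)) ⧸ m') ≃+* B ⧸ m :=
          DoubleQuot.quotQuotEquivQuotOfLE hle2
        haveI : Finite ((B ⧸ (m ^ (i + 1) : Ideal B)) ⧸ m') :=
          Finite.of_equiv _ e2.symm.toEquiv
        haveI : Finite J := Module.finite_of_finite ((B ⧸ (m ^ (i + 1) : Ideal B)) ⧸ m')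
        have e1 : ((B ⧸ (m ^ (i + 1) : Ideal B)) ⧸ J) ≃+* B ⧸ (m ^ i : Ideal B) :=
          DoubleQuot.quotQuotEquivQuotOfLE hle1
        haveI : Finite ((B ⧸ (m ^ (i + 1) : Ideal B)) ⧸ J) :=
          Finite.of_equiv _ e1.symm.toEquiv
        exact @Finite.of_addSubgroup_quotient _ _ J.toAddSubgroup ‹Finite J› ‹Finite ((B ⧸ (m ^ (i + 1) : Ideal B)) ⧸ J)›
  -- Step 7: hence `B` itself is finite.
  haveI hfinB : Finite B := by
    have hq := hfinq n
    rw [hn] at hq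
    have hinj : Function.Injective (Ideal.Quotient.mk (⊥ : Ideal B)) := by
      rw [RingHom.injective_iff_ker_eq_bot, Ideal.mk_ker]
    exact Finite.of_injective _ hinj
  -- Step 8: transfer the finite ring `B` down to `Type 0` via `Shrink`.
  haveI : Small.{0} B := Countable.toSmall B
  let e' : B ≃+* Shrink.{0} B := (Shrink.ringEquiv B).symm
  refine ⟨Shrink.{0} B, inferInstance, Finite.of_equiv B (equivShrink B), ?_, ?_⟩
  · exact e'.toRingHom.comp (Ideal.Quotient.mk I)
  · intro h
    apply hb
    apply e'.injective
    simpa using h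
end

section
/- Let Γ be a group, h ∈ Γ, S = h^Γ ∪ (h^{-1})^Γ the union of the conjugacy classes of h and h^{-1}, and for n ≥ 1 let [S]^n = { g_1⋯g_n : g_i ∈ S ∪ {1} }. If |[S]^D| ≤ D for some D ≥ 1, then [S]^D equals the normal subgroup of Γ generated by h. -/
def setPow {G : Type*} [Group G] (S : Set G) (n : ℕ) : Set G :=
  { g | ∃ f : Fin n → G, (∀ i, f i ∈ S ∪ {1}) ∧ g = (List.ofFn f).prod }

namespace SetPowAux

variable {G : Type*} [Group G] {S : Set G}

lemma mem_setPow_iff {g : G} {n : ℕ} :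
    g ∈ setPow S n ↔ ∃ l : List G, l.length = n ∧ (∀ x ∈ l, x ∈ S ∪ {1}) ∧ g = l.prod := by
  constructor
  · rintro ⟨f, hf, rfl⟩
    refine ⟨List.ofFn f, List.length_ofFn, ?_, rfl⟩
    intro x hx
    obtain ⟨i, rfl⟩ := List.mem_ofFn.1 hx
    exact hf i
  · rintro ⟨l, rfl, hl, rfl⟩
    exact ⟨l.get, fun i => hl _ (l.get_mem i), by rw [List.ofFn_get]⟩

lemma one_mem (n : ℕ) : (1 : G) ∈ setPow S n := by
  rw [mem_setPow_iff]
  refine ⟨List.replicate n 1, List.length_replicate, ?_, ?_⟩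
  · intro x hx; rw [List.eq_of_mem_replicate hx]; exact Or.inr rfl
  · simp

lemma mul_mem' {a b : G} {n m : ℕ} (ha : a ∈ setPow S n) (hb : b ∈ setPow S m) :
    a * b ∈ setPow S (n + m) := by
  rw [mem_setPow_iff] at *
  obtain ⟨l, hl, hl1, rfl⟩ := ha
  obtain ⟨l', hl', hl'1, rfl⟩ := hb
  refine ⟨l ++ l', by simp [hl, hl'], ?_, (List.prod_append).symm⟩
  intro x hx
  rcases List.mem_append.1 hx with h|h
  exacts [hl1 x h, hl'1 x h]

lemma mono {n m : ℕ} (hnm : n ≤ m) : setPow S n ⊆ setPow S m := by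
  intro g hg
  have : g * 1 ∈ setPow S (n + (m - n)) := mul_mem' hg (one_mem _)
  rwa [mul_one, Nat.add_sub_cancel' hnm] at this

lemma inv_mem' (hSinv : ∀ x ∈ S, x⁻¹ ∈ S) {g : G} {n : ℕ} (hg : g ∈ setPow S n) :
    g⁻¹ ∈ setPow S n := by
  rw [mem_setPow_iff] at *
  obtain ⟨l, hl, hl1, rfl⟩ := hg
  refine ⟨(l.map (·⁻¹)).reverse, by simp [hl], ?_, ?_⟩
  · intro x hx
    simp only [List.mem_reverse, List.mem_map] at hx
    obtain ⟨y, hy, rfl⟩ := hx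
    rcases hl1 y hy with h|h
    · exact Or.inl (hSinv y h)
    · rw [Set.mem_singleton_iff] at h; subst h; exact Or.inr (by simp)
  · rw [List.prod_inv_reverse]


lemma single_mem {x : G} (hx : x ∈ S ∪ {1}) : x ∈ setPow S 1 := by
  rw [mem_setPow_iff]
  exact ⟨[x], rfl, by simpa using hx, by simp⟩

lemma stab_succ {j m : ℕ} (hj : setPow S j = setPow S (j + 1)) (hm : j ≤ m) :
    setPow S m = setPow S j := by
  induction m with
  | zero =>
    have : j = 0 := by omega
    rw [this]
  | succ k ih =>
    rcases Nat.lt_or_ge j (k+1) with hlt | hge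
    · have hk : j ≤ k := by omega
      have ihk := ih hk
      apply Set.Subset.antisymm
      · intro g hg
        rw [mem_setPow_iff] at hg
        obtain ⟨l, hl, hl1, rfl⟩ := hg
        cases l with
        | nil => simp at hl
        | cons a t =>
          have ht : t.prod ∈ setPow S k := by
            rw [mem_setPow_iff]
            exact ⟨t, by simpa using hl, fun x hx => hl1 x (List.mem_cons_of_mem a hx), rfl⟩
          rw [ihk] at ht
          have : a * t.prod ∈ setPow S (1 + j) :=
            mul_mem' (single_mem (hl1 a List.mem_cons_self)) ht
          rw [Nat.add_comm, ← hj] at this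
          simpa using this
      · intro g hg
        exact mono (by omega) hg
    · have : j = k + 1 := by omega
      rw [this]


lemma conj_prod (g : G) (l : List G) :
    (l.map (fun y => g * y * g⁻¹)).prod = g * l.prod * g⁻¹ := by
  induction l with
  | nil => simp
  | cons a t ih => simp only [List.map_cons, List.prod_cons, ih]; group

lemma conj_mem' (hSconj : ∀ x ∈ S, ∀ g : G, g * x * g⁻¹ ∈ S)
    {x : G} {n : ℕ} (hx : x ∈ setPow S n) (g : G) : g * x * g⁻¹ ∈ setPow S n := by
  rw [mem_setPow_iff] at *
  obtain ⟨l, hl, hl1, rfl⟩ := hx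
  refine ⟨l.map (fun y => g * y * g⁻¹), by simp [hl], ?_, ?_⟩
  · intro x hx
    simp only [List.mem_map] at hx
    obtain ⟨y, hy, rfl⟩ := hx
    rcases hl1 y hy with h|h
    · exact Or.inl (hSconj y h g)
    · rw [Set.mem_singleton_iff] at h; subst h; simp
  · exact (conj_prod g l).symm

end SetPowAux

open SetPowAux in
/-- If `S = h^Γ ∪ (h⁻¹)^Γ` and `|[S]^D| ≤ D` for some `D ≥ 1`, then `[S]^D` is the
normal subgroup of `Γ` generated by `h`. -/
theorem setPow_eq_normalClosure {G : Type*} [Group G] (h : G)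
    (S : Set G) (hS : S = {x | IsConj h x} ∪ {x | IsConj h⁻¹ x})
    (D : ℕ) (hD : 1 ≤ D) (hfin : (setPow S D).Finite)
    (hcard : (setPow S D).ncard ≤ D) :
    setPow S D = (Subgroup.normalClosure {h} : Subgroup G) := by
  -- basic properties of S
  have hSinv : ∀ x ∈ S, x⁻¹ ∈ S := by
    intro x hx
    rw [hS] at hx ⊢
    rcases hx with hx|hx
    · obtain ⟨c, hc⟩ := isConj_iff.mp hx
      exact Or.inr (isConj_iff.mpr ⟨c, by rw [← hc]; group⟩)
    · obtain ⟨c, hc⟩ := isConj_iff.mp hx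
      exact Or.inl (isConj_iff.mpr ⟨c, by rw [← hc]; group⟩)
  have hSconj : ∀ x ∈ S, ∀ g : G, g * x * g⁻¹ ∈ S := by
    intro x hx g
    rw [hS] at hx ⊢
    have hc : IsConj x (g * x * g⁻¹) := ⟨⟨g, g⁻¹, by simp, by simp⟩, by
      simp [SemiconjBy, mul_assoc]⟩
    rcases hx with hx|hx
    · exact Or.inl (hx.trans hc)
    · exact Or.inr (hx.trans hc)
  have hhS : h ∈ S := by rw [hS]; exact Or.inl (IsConj.refl h)
  -- every element of setPow S n lies in the normal closure
  have hsub : ∀ n, setPow S n ⊆ (Subgroup.normalClosure {h} : Subgroup G) := by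
    intro n g hg
    rw [mem_setPow_iff] at hg
    obtain ⟨l, hl, hl1, rfl⟩ := hg
    refine Subgroup.list_prod_mem _ ?_
    intro x hx
    rcases hl1 x hx with hx'|hx'
    · rw [hS] at hx'
      have hmem : h ∈ Subgroup.normalClosure ({h} : Set G) :=
        Subgroup.subset_normalClosure rfl
      rcases hx' with hc|hc
      · obtain ⟨c, hc⟩ := isConj_iff.mp hc
        have := (Subgroup.normalClosure_normal (s := ({h} : Set G))).conj_mem h hmem c
        rwa [hc] at this
      · obtain ⟨c, hc⟩ := isConj_iff.mp hc
        have hinv : h⁻¹ ∈ Subgroup.normalClosure ({h} : Set G) := inv_mem hmem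
        have := (Subgroup.normalClosure_normal (s := ({h} : Set G))).conj_mem h⁻¹ hinv c
        rwa [hc] at this
    · rw [Set.mem_singleton_iff] at hx'; subst hx'; exact one_mem _
  by_cases hone : h = 1
  · -- degenerate case
    subst hone
    have hSone : ∀ x ∈ S, x = 1 := by
      intro x hx
      rw [hS] at hx
      rcases hx with hx|hx
      · obtain ⟨c, hc⟩ := isConj_iff.mp hx
        rw [← hc]; group
      · obtain ⟨c, hc⟩ := isConj_iff.mp hx
        rw [← hc]; group
    have h1 : setPow S D = {1} := by
      apply Set.Subset.antisymm
      · intro g hg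
        rw [mem_setPow_iff] at hg
        obtain ⟨l, hl, hl1, rfl⟩ := hg
        have : ∀ x ∈ l, x = 1 := by
          intro x hx
          rcases hl1 x hx with hx'|hx'
          · exact hSone x hx'
          · exact hx'
        simp [List.prod_eq_one this]
      · rintro g rfl; exact one_mem D
    rw [h1]
    have : Subgroup.normalClosure ({(1:G)} : Set G) = ⊥ := by
      apply le_antisymm
      · apply Subgroup.normalClosure_le_normal
        simp
      · exact bot_le
    rw [this]
    simp
  · -- main case: find a stabilization point
    have hstab : ∃ j, 1 ≤ j ∧ j ≤ D ∧ setPow S j = setPow S (j + 1) := by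
      by_contra hcon
      push_neg at hcon
      have key : ∀ k, 1 ≤ k → k ≤ D → k + 1 ≤ (setPow S k).ncard := by
        intro k hk1 hkD
        induction k with
        | zero => omega
        | succ m ih =>
          rcases Nat.eq_or_lt_of_le hk1 with heq | hlt
          · -- k = 1 : {1, h} ⊆ setPow S 1
            have hm0 : m = 0 := by omega
            subst hm0
            have hsub1 : ({1, h} : Set G) ⊆ setPow S 1 := by
              rintro x (rfl | rfl)
              · exact one_mem 1
              · exact single_mem (Or.inl hhS)
            have hfin1 : (setPow S (0+1)).Finite := hfin.subset (mono (by omega))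
            have : ({1, h} : Set G).ncard ≤ (setPow S (0+1)).ncard := by
              apply Set.ncard_le_ncard _ hfin1
              simpa using hsub1
            rw [Set.ncard_pair (Ne.symm hone)] at this
            omega
          · have hm1 : 1 ≤ m := by omega
            have hmD : m ≤ D := by omega
            have ihm := ih hm1 hmD
            have hne := hcon m hm1 hmD
            have hssub : setPow S m ⊂ setPow S (m + 1) :=
              Set.ssubset_iff_subset_ne.mpr ⟨mono (by omega), hne⟩
            have hfinm : (setPow S (m+1)).Finite := hfin.subset (mono (by omega))
            have := Set.ncard_lt_ncard hssub hfinm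
            omega
      have := key D hD (le_refl D)
      omega
    obtain ⟨j, hj1, hjD, hj⟩ := hstab
    have hallj : ∀ m, j ≤ m → setPow S m = setPow S j := fun m hm => stab_succ hj hm
    have hDj : setPow S D = setPow S j := hallj D hjD
    -- setPow S D is a normal subgroup containing h
    have hmul : ∀ x ∈ setPow S D, ∀ y ∈ setPow S D, x * y ∈ setPow S D := by
      intro x hx y hy
      have : x * y ∈ setPow S (D + D) := mul_mem' hx hy
      rw [hallj (D+D) (by omega), ← hDj] at this
      exact this
    set H : Subgroup G := {
      carrier := setPow S D
      one_mem' := one_mem D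
      mul_mem' := fun {a b} ha hb => hmul a ha b hb
      inv_mem' := fun {a} ha => inv_mem' hSinv ha } with hH
    have hnormal : H.Normal := by
      constructor
      intro x hx g
      exact conj_mem' hSconj hx g
    have hle : Subgroup.normalClosure ({h} : Set G) ≤ H := by
      apply Subgroup.normalClosure_le_normal
      intro x hx
      rw [Set.mem_singleton_iff] at hx
      subst hx
      exact mono hD (single_mem (Or.inl hhS))
    exact Set.Subset.antisymm (hsub D) hle
end

section
/- Let Γ be a group, h ∈ Γ, and S = h^Γ ∪ (h^{-1})^Γ. If h is not contained in any finite normal subgroup of Γ, then |[S]^D| > D for every D ≥ 1. -/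
open Pointwise

lemma setPow_eq_pow {G : Type*} [Group G] (S : Set G) (n : ℕ) :
    setPow S n = (S ∪ {1}) ^ n := by
  ext g
  simp only [setPow, Set.mem_setOf_eq, Set.mem_pow]
  constructor
  · rintro ⟨f, hf, rfl⟩
    exact ⟨fun i => ⟨f i, hf i⟩, rfl⟩
  · rintro ⟨f, rfl⟩
    exact ⟨fun i => f i, fun i => (f i).2, rfl⟩

/-- If `h` is not contained in any finite normal subgroup of `Γ`, then
`|[S]^D| > D` for every `D ≥ 1`, where `S = h^Γ ∪ (h⁻¹)^Γ`. -/
theorem setPow_card_gt {G : Type*} [Group G] (h : G)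
    (S : Set G) (hS : S = {x | IsConj h x} ∪ {x | IsConj h⁻¹ x})
    (hnot : ∀ N : Subgroup G, N.Normal → (N : Set G).Finite → h ∉ N) :
    ∀ D : ℕ, 1 ≤ D → ∀ hfin : (setPow S D).Finite, D < (setPow S D).ncard := by
  intro D hD hfin
  set T : Set G := S ∪ {1} with hT
  have h1T : (1 : G) ∈ T := Or.inr rfl
  have hfinD : (T ^ D).Finite := by rwa [setPow_eq_pow] at hfin
  have hfinn : ∀ n ≤ D, (T ^ n).Finite :=
    fun n hn => hfinD.subset (Set.pow_subset_pow_right h1T hn)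
  rw [setPow_eq_pow]
  by_cases hstrict : ∀ n < D, ¬ (T ^ (n + 1) ⊆ T ^ n)
  · -- strictly increasing chain
    have key : ∀ n ≤ D, n < (T ^ n).ncard := by
      intro n
      induction n with
      | zero =>
        intro _
        rw [pow_zero, ← Set.singleton_one]
        simp [Set.ncard_singleton]
      | succ k ih =>
        intro hk
        have hk' : k ≤ D := Nat.le_of_succ_le hk
        have h1 : T ^ k ⊂ T ^ (k + 1) :=
          ⟨Set.pow_subset_pow_right h1T (Nat.le_succ k),
            fun hsub => hstrict k (Nat.lt_of_succ_le hk) hsub⟩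
        have := Set.ncard_lt_ncard h1 (hfinn _ hk)
        exact Nat.lt_of_le_of_lt (Nat.succ_le_of_lt (ih hk')) this
    exact key D le_rfl
  · -- stabilization: build a finite normal subgroup containing h
    push_neg at hstrict
    obtain ⟨n, hnD, hsub⟩ := hstrict
    exfalso
    have heq : T ^ (n + 1) = T ^ n :=
      subset_antisymm hsub (Set.pow_subset_pow_right h1T (Nat.le_succ n))
    have hstab : ∀ m, T ^ (n + m) = T ^ n := by
      intro m
      induction m with
      | zero => rfl
      | succ k ih =>
        calc T ^ (n + (k + 1)) = T ^ (n + k) * T := by rw [← pow_succ, Nat.add_succ]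
        _ = T ^ n * T := by rw [ih]
        _ = T ^ (n + 1) := (pow_succ T n).symm
        _ = T ^ n := heq
    -- S is symmetric under inverse
    have hSinv : ∀ x ∈ S, x⁻¹ ∈ S := by
      intro x hx
      rw [hS] at hx ⊢
      rcases hx with hx | hx
      · obtain ⟨c, hc⟩ := isConj_iff.1 hx
        exact Or.inr (isConj_iff.2 ⟨c, by rw [← hc]; group⟩)
      · obtain ⟨c, hc⟩ := isConj_iff.1 hx
        exact Or.inl (isConj_iff.2 ⟨c, by rw [← hc]; group⟩)
    have hTinv : T⁻¹ = T := by
      ext x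
      simp only [Set.mem_inv, hT, Set.mem_union, Set.mem_singleton_iff, inv_eq_one]
      constructor
      · rintro (hx | hx)
        · exact Or.inl (by simpa using hSinv _ hx)
        · exact Or.inr hx
      · rintro (hx | hx)
        · exact Or.inl (hSinv _ hx)
        · exact Or.inr hx
    -- S (hence T) is closed under conjugation
    have hSconj : ∀ g : G, ∀ x ∈ S, g * x * g⁻¹ ∈ S := by
      intro g x hx
      rw [hS] at hx ⊢
      rcases hx with hx | hx
      · exact Or.inl (hx.trans (isConj_iff.2 ⟨g, rfl⟩))
      · exact Or.inr (hx.trans (isConj_iff.2 ⟨g, rfl⟩))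
    have hTconj : ∀ g : G, ⇑(MulAut.conj g) '' T = T := by
      intro g
      apply subset_antisymm
      · rintro _ ⟨x, hx, rfl⟩
        rcases hx with hx | hx
        · exact Or.inl (by simpa [MulAut.conj_apply] using hSconj g x hx)
        · right; simp_all [MulAut.conj_apply]
      · intro x hx
        refine ⟨g⁻¹ * x * g, ?_, by simp [MulAut.conj_apply]; group⟩
        rcases hx with hx | hx
        · exact Or.inl (by simpa using hSconj g⁻¹ x hx)
        · right
          simp only [Set.mem_singleton_iff] at hx ⊢
          simp [hx]
    have hconjpow : ∀ g : G, ∀ x ∈ T ^ n, g * x * g⁻¹ ∈ T ^ n := by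
      intro g x hx
      have himg := Set.image_pow (MulAut.conj g : G →* G) T n
      have : (MulAut.conj g) x ∈ ⇑(MulAut.conj g) '' (T ^ n) := ⟨x, hx, rfl⟩
      rw [show ⇑((MulAut.conj g : G →* G)) = ⇑(MulAut.conj g) from rfl] at himg
      rw [himg, hTconj] at this
      simpa [MulAut.conj_apply] using this
    -- build the subgroup
    let N : Subgroup G :=
      { carrier := T ^ n
        one_mem' := Set.one_mem_pow h1T
        mul_mem' := by
          intro a b ha hb
          have : a * b ∈ T ^ n * T ^ n := Set.mul_mem_mul ha hb
          rwa [← pow_add, hstab n] at this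
        inv_mem' := by
          intro a ha
          have : a⁻¹ ∈ (T ^ n)⁻¹ := by simpa using ha
          rwa [← inv_pow, hTinv] at this }
    have hNnormal : N.Normal := ⟨fun x hx g => hconjpow g x hx⟩
    have hNfin : (N : Set G).Finite := hfinn n (Nat.le_of_lt hnD)
    have hhN : h ∈ N := by
      have hhT : h ∈ T := Or.inl (by rw [hS]; exact Or.inl (IsConj.refl h))
      rcases Nat.eq_zero_or_pos n with hn0 | hn1
      · subst hn0
        have : h ∈ T ^ 1 := by simpa using hhT
        rw [heq] at this
        exact this
      · exact Set.pow_subset_pow_right h1T hn1 (by simpa using hhT)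
    exact hnot N hNnormal hNfin hhN
end

section
/- For n ≥ 3 and any matrix h in SL_n(Z) of the block form [[I_{n-2}, A],[0, B]] with A a nonzero (n-2)×2 integer matrix and B in SL_2(Z), there exist matrices A', B' of the same shapes such that the commutator [[I,A],[0,B]]·[[I,A'],[0,B']]·[[I,A],[0,B]]^{-1}·[[I,A'],[0,B']]^{-1} is a nonidentity matrix of the form [[I_{n-2}, A''],[0, I_2]]. -/
open Matrix

lemma inv_blocks {m : ℕ} (A : Matrix (Fin m) (Fin 2) ℤ) (B : Matrix (Fin 2) (Fin 2) ℤ)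
    (hB : B.det = 1) :
    (fromBlocks (1 : Matrix (Fin m) (Fin m) ℤ) A 0 B)⁻¹
      = fromBlocks 1 (-(A * B⁻¹)) 0 B⁻¹ := by
  apply Matrix.inv_eq_right_inv
  have hBu : IsUnit B.det := by simp [hB]
  rw [Matrix.fromBlocks_multiply]
  simp [Matrix.mul_nonsing_inv B hBu, ← Matrix.fromBlocks_one]

lemma comm1 {m : ℕ} (A A' : Matrix (Fin m) (Fin 2) ℤ) (B : Matrix (Fin 2) (Fin 2) ℤ)
    (hB : B.det = 1) :
    fromBlocks (1 : Matrix (Fin m) (Fin m) ℤ) A 0 B * fromBlocks 1 A' 0 1 *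
      (fromBlocks (1 : Matrix (Fin m) (Fin m) ℤ) A 0 B)⁻¹ * (fromBlocks (1 : Matrix (Fin m) (Fin m) ℤ) A' 0 1)⁻¹
    = fromBlocks 1 (A' * B⁻¹ - A') 0 1 := by
  have hBu : IsUnit B.det := by simp [hB]
  rw [inv_blocks A B hB, inv_blocks A' 1 (by simp)]
  rw [inv_one]
  simp only [Matrix.fromBlocks_multiply, Matrix.mul_one, Matrix.one_mul,
    Matrix.mul_zero, Matrix.zero_mul, add_zero, zero_add, Matrix.add_mul,
    Matrix.mul_nonsing_inv B hBu]
  abel_nf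

lemma comm2 {m : ℕ} (A : Matrix (Fin m) (Fin 2) ℤ) (B' : Matrix (Fin 2) (Fin 2) ℤ)
    (hB' : B'.det = 1) :
    fromBlocks (1 : Matrix (Fin m) (Fin m) ℤ) A 0 1 * fromBlocks 1 0 0 B' *
      (fromBlocks (1 : Matrix (Fin m) (Fin m) ℤ) A 0 1)⁻¹ * (fromBlocks (1 : Matrix (Fin m) (Fin m) ℤ) 0 0 B')⁻¹
    = fromBlocks 1 (A - A * B'⁻¹) 0 1 := by
  have hBu : IsUnit B'.det := by simp [hB']
  rw [inv_blocks A 1 (by simp), inv_blocks 0 B' hB']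
  rw [inv_one]
  simp only [Matrix.fromBlocks_multiply, Matrix.mul_one, Matrix.one_mul,
    Matrix.mul_zero, Matrix.zero_mul, add_zero, zero_add, Matrix.add_mul, Matrix.sub_mul,
    Matrix.zero_mul, neg_zero, Matrix.mul_nonsing_inv B' hBu]
  rw [Matrix.mul_assoc A B' B'⁻¹, Matrix.mul_nonsing_inv B' hBu,
    show -A * B'⁻¹ + A * (1 : Matrix (Fin 2) (Fin 2) ℤ) = A - A * B'⁻¹ by rw [Matrix.neg_mul, Matrix.mul_one]; abel]

lemma blocks_ne_one {m : ℕ} (X : Matrix (Fin m) (Fin 2) ℤ) (hX : X ≠ 0) :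
    fromBlocks (1 : Matrix (Fin m) (Fin m) ℤ) X 0 (1 : Matrix (Fin 2) (Fin 2) ℤ) ≠ 1 := by
  intro h
  rw [← Matrix.fromBlocks_one] at h
  exact hX (by ext i j; simpa [Matrix.one_apply] using congrFun (congrFun h (Sum.inl i)) (Sum.inr j))

/-- For `n = m + 2 ≥ 3` and `h = [[I_m, A],[0,B]] ∈ SL_n(ℤ)` with `A ≠ 0`, there exist
`A'`, `B'` of the same shapes with `det B' = 1` such that the commutator of the two block
matrices is a nonidentity matrix of the form `[[I_m, A''],[0, I_2]]`. -/
theorem block_commutator_unipotent (m : ℕ) (hm : 1 ≤ m)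
    (A : Matrix (Fin m) (Fin 2) ℤ) (hA : A ≠ 0)
    (B : Matrix (Fin 2) (Fin 2) ℤ) (hB : B.det = 1) :
    ∃ (A' : Matrix (Fin m) (Fin 2) ℤ) (B' : Matrix (Fin 2) (Fin 2) ℤ),
      B'.det = 1 ∧
      ∃ A'' : Matrix (Fin m) (Fin 2) ℤ,
        Matrix.fromBlocks (1 : Matrix (Fin m) (Fin m) ℤ) A 0 B * Matrix.fromBlocks (1 : Matrix (Fin m) (Fin m) ℤ) A' 0 B' *
            (Matrix.fromBlocks (1 : Matrix (Fin m) (Fin m) ℤ) A 0 B)⁻¹ * (Matrix.fromBlocks (1 : Matrix (Fin m) (Fin m) ℤ) A' 0 B')⁻¹ =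
          Matrix.fromBlocks (1 : Matrix (Fin m) (Fin m) ℤ) A'' 0 (1 : Matrix (Fin 2) (Fin 2) ℤ) ∧
        Matrix.fromBlocks (1 : Matrix (Fin m) (Fin m) ℤ) A'' 0 (1 : Matrix (Fin 2) (Fin 2) ℤ) ≠ 1 := by
  have hBu : IsUnit B.det := by simp [hB]
  by_cases hB1 : B = 1
  · -- use B' a shear, A' = 0
    obtain ⟨k, j, hkj⟩ : ∃ k j, A k j ≠ 0 := by
      by_contra hc
      push_neg at hc
      exact hA (by ext k j; simpa using hc k j)
    subst hB1
    fin_cases j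
    · refine ⟨0, !![1,1;0,1], by norm_num [Matrix.det_fin_two_of], A - A * !![1,-1;0,1], ?_, ?_⟩
      · have hinv : (!![1,1;0,1] : Matrix (Fin 2) (Fin 2) ℤ)⁻¹ = !![1,-1;0,1] := by
          apply Matrix.inv_eq_right_inv
          norm_num [Matrix.mul_fin_two, ← Matrix.one_fin_two]
        rw [← hinv]
        exact comm2 A _ (by norm_num [Matrix.det_fin_two_of])
      · apply blocks_ne_one
        intro h
        apply hkj
        have := congrFun (congrFun h k) 1
        simpa [Matrix.mul_apply, Fin.sum_univ_two] using this
    · refine ⟨0, !![1,0;1,1], by norm_num [Matrix.det_fin_two_of], A - A * !![1,0;-1,1], ?_, ?_⟩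
      · have hinv : (!![1,0;1,1] : Matrix (Fin 2) (Fin 2) ℤ)⁻¹ = !![1,0;-1,1] := by
          apply Matrix.inv_eq_right_inv
          norm_num [Matrix.mul_fin_two, ← Matrix.one_fin_two]
        rw [← hinv]
        exact comm2 A _ (by norm_num [Matrix.det_fin_two_of])
      · apply blocks_ne_one
        intro h
        apply hkj
        have := congrFun (congrFun h k) 0
        simpa [Matrix.mul_apply, Fin.sum_univ_two] using this
  · -- B ≠ 1 : use B' = 1, A' a std basis matrix
    have hBi : B⁻¹ ≠ 1 := by
      intro h
      apply hB1
      have := Matrix.mul_nonsing_inv B hBu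
      rw [h, Matrix.mul_one] at this
      exact this
    obtain ⟨i, j, hij⟩ : ∃ i j, B⁻¹ i j ≠ (1 : Matrix (Fin 2) (Fin 2) ℤ) i j := by
      by_contra hc
      push_neg at hc
      exact hBi (by ext i j; exact hc i j)
    set k0 : Fin m := ⟨0, hm⟩
    set A' : Matrix (Fin m) (Fin 2) ℤ := Matrix.single k0 i 1
    refine ⟨A', 1, Matrix.det_one, A' * B⁻¹ - A', comm1 A A' B hB, ?_⟩
    apply blocks_ne_one
    intro h
    apply hij
    have := congrFun (congrFun h k0) j
    simpa [A', Matrix.mul_apply, Matrix.single, Matrix.one_apply, ite_and,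
      Fin.sum_univ_two, sub_eq_zero] using this
end

section
/- Let G be a group with subgroups Δ and Γ such that G = Δ ⋊ Γ (Δ normal, G = ΔΓ, Δ ∩ Γ = 1), let b ∈ Γ, and suppose Z(C_G(b)) ∩ Γ = Z(C_Γ(b)). Then Z(C_G(b)) is the internal direct product of Z(C_G(b)) ∩ Δ and Z(C_Γ(b)). -/
/-- The center of the centralizer of `b` taken inside a subset `S` of a group `G`:
`Z(C_S(b)) = { g ∈ S : g commutes with b, and g commutes with every element of S
that commutes with b }`. -/
def zCent {G : Type*} [Group G] (S : Set G) (b : G) : Set G :=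
  { g | g ∈ S ∧ g * b = b * g ∧ ∀ x ∈ S, x * b = b * x → g * x = x * g }

/-- Uniqueness of decomposition in a semidirect product. -/
lemma semidirect_uniq {G : Type*} [Group G] (Δ Γ : Subgroup G) (hint : Δ ⊓ Γ = ⊥)
    {d d' c c' : G} (hd : d ∈ Δ) (hd' : d' ∈ Δ) (hc : c ∈ Γ) (hc' : c' ∈ Γ)
    (h : d * c = d' * c') : d = d' ∧ c = c' := by
  have h1 : d'⁻¹ * d = c' * c⁻¹ := by
    have := congrArg (fun y => d'⁻¹ * y * c⁻¹) h
    simpa [mul_assoc] using this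
  have h2 : d'⁻¹ * d ∈ Δ ⊓ Γ :=
    ⟨mul_mem (Δ.inv_mem hd') hd, h1 ▸ mul_mem hc' (Γ.inv_mem hc)⟩
  rw [hint, Subgroup.mem_bot, inv_mul_eq_one] at h2
  refine ⟨h2.symm, ?_⟩
  rw [← h2] at h
  exact mul_left_cancel h

/-- If `G = Δ ⋊ Γ`, `b ∈ Γ`, and `Z(C_G(b)) ∩ Γ = Z(C_Γ(b))`, then `Z(C_G(b))` is the
internal direct product of `Z(C_G(b)) ∩ Δ` and `Z(C_Γ(b))`: the two factors commute
elementwise and every element of `Z(C_G(b))` factors uniquely as a product. -/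
theorem center_centralizer_direct_product {G : Type*} [Group G]
    (Δ Γ : Subgroup G) (hΔ : Δ.Normal)
    (hprod : ∀ g : G, ∃ d ∈ Δ, ∃ c ∈ Γ, g = d * c)
    (hint : Δ ⊓ Γ = ⊥)
    (b : G) (hb : b ∈ Γ)
    (hZ : zCent Set.univ b ∩ (Γ : Set G) = zCent (Γ : Set G) b) :
    (∀ d ∈ zCent Set.univ b ∩ (Δ : Set G), ∀ c ∈ zCent (Γ : Set G) b, d * c = c * d) ∧
    ∀ z ∈ zCent Set.univ b,
      ∃! p : G × G,
        p.1 ∈ zCent Set.univ b ∩ (Δ : Set G) ∧ p.2 ∈ zCent (Γ : Set G) b ∧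
          z = p.1 * p.2 := by
  constructor
  · rintro d ⟨⟨-, -, hdz⟩, -⟩ c ⟨-, hcb, -⟩
    exact hdz c (Set.mem_univ c) hcb
  · rintro z ⟨-, hzb, hzc⟩
    obtain ⟨d, hdΔ, c, hcΓ, rfl⟩ := hprod z
    -- conjugation by b fixes d and c
    have hconj : d * c = (b * d * b⁻¹) * (b * c * b⁻¹) := by
      rw [show (b * d * b⁻¹) * (b * c * b⁻¹) = b * (d * c) * b⁻¹ by group, ← hzb]
      group
    obtain ⟨hdb', hcb'⟩ := semidirect_uniq Δ Γ hint hdΔ (hΔ.conj_mem d hdΔ b)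
      hcΓ (mul_mem (mul_mem hb hcΓ) (inv_mem hb)) hconj
    have hdb : d * b = b * d := by
      conv_lhs => rw [hdb']
      group
    have hcb : c * b = b * c := by
      conv_lhs => rw [hcb']
      group
    -- c lies in Z(C_Γ(b))
    have hcZ : c ∈ zCent (Γ : Set G) b := by
      refine ⟨hcΓ, hcb, fun x hx hxb => ?_⟩
      have hzx := hzc x (Set.mem_univ x) hxb
      -- d * (c * x) = (x * d * x⁻¹) * (x * c)
      have hdecomp : d * (c * x) = (x * d * x⁻¹) * (x * c) := by
        rw [← mul_assoc] at hzx ⊢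
        rw [hzx]; group
      exact (semidirect_uniq Δ Γ hint hdΔ (hΔ.conj_mem d hdΔ x)
        (mul_mem hcΓ hx) (mul_mem hx hcΓ) hdecomp).2
    -- via hZ, c lies in Z(C_G(b))
    have hcU : c ∈ zCent Set.univ b ∩ (Γ : Set G) := by rw [hZ]; exact hcZ
    obtain ⟨⟨-, -, hcz⟩, -⟩ := hcU
    -- d lies in Z(C_G(b))
    have hdU : d ∈ zCent Set.univ b := by
      refine ⟨Set.mem_univ d, hdb, fun x hx hxb => ?_⟩
      have hzx := hzc x (Set.mem_univ x) hxb
      have hcx := hcz x (Set.mem_univ x) hxb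
      have key : d * x * c = x * d * c := by
        rw [mul_assoc, ← hcx, ← mul_assoc, hzx, ← mul_assoc]
      exact mul_right_cancel key
    refine ⟨(d, c), ⟨⟨hdU, hdΔ⟩, hcZ, rfl⟩, ?_⟩
    rintro ⟨d', c'⟩ ⟨⟨-, hd'Δ⟩, ⟨hc'Γ, -, -⟩, heq⟩
    obtain ⟨h1, h2⟩ := semidirect_uniq Δ Γ hint hd'Δ hdΔ hc'Γ hcΓ heq.symm
    simp only [Prod.mk.injEq]
    exact ⟨h1, h2⟩
end

section
/- Let G = C_25 ⋊_{ρ_6} Z and H = C_25 ⋊_{ρ_11} Z, where ρ_m : Z → Aut(C_25) sends 1 to the automorphism x ↦ x^m. Then G × Z and H × Z are isomorphic. -/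
/-- The automorphism of the (multiplicatively written) cyclic group of order 25 sending
every element to its `m`-th power, for `m` coprime to 25. -/
def powAut (m : ℕ) (hm : Nat.Coprime m 25) : MulAut (Multiplicative (ZMod 25)) :=
  AddEquiv.toMultiplicative
    (DistribMulAction.toAddAut ((ZMod 25)ˣ) (ZMod 25) (ZMod.unitOfCoprime m hm))

/-- The semidirect product `C_25 ⋊_{ρ_m} ℤ`, where `ρ_m(1)` is the `m`-th power map. -/
abbrev cyclicSemidirect (m : ℕ) (hm : Nat.Coprime m 25) :=
  Multiplicative (ZMod 25) ⋊[zpowersHom (MulAut (Multiplicative (ZMod 25))) (powAut m hm)]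
    Multiplicative ℤ

lemma powAut_apply (m : ℕ) (hm : Nat.Coprime m 25) (x : Multiplicative (ZMod 25)) :
    powAut m hm x = Multiplicative.ofAdd ((m : ZMod 25) * x.toAdd) := rfl

lemma powAut_cube : (powAut 11 (by decide))^3 = powAut 6 (by decide) := by
  ext x
  simp only [pow_succ, pow_zero, one_mul, MulAut.mul_apply, powAut_apply, toAdd_ofAdd]
  ring_nf
  have : ((1331 : ℕ) : ZMod 25) = ((6 : ℕ) : ZMod 25) := by decide
  push_cast at this
  rw [this]

lemma powAut_fifth : (powAut 11 (by decide))^5 = 1 := by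
  ext x
  simp only [pow_succ, pow_zero, one_mul, MulAut.mul_apply, powAut_apply, toAdd_ofAdd,
    MulAut.one_apply]
  ring_nf
  have : ((161051 : ℕ) : ZMod 25) = ((1 : ℕ) : ZMod 25) := by decide
  push_cast at this
  rw [this, mul_one]

lemma key (s u : Multiplicative ℤ) :
    zpowersHom (MulAut (Multiplicative (ZMod 25))) (powAut 11 (by decide)) (s^3 * u^5)
      = zpowersHom (MulAut (Multiplicative (ZMod 25))) (powAut 6 (by decide)) s := by
  simp only [zpowersHom_apply, toAdd_mul, toAdd_pow]
  rw [zpow_add, nsmul_eq_mul, nsmul_eq_mul, zpow_mul, zpow_mul, zpow_natCast, zpow_natCast,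
    powAut_cube, powAut_fifth, one_zpow, mul_one]

/-- `(C_25 ⋊_{ρ_6} ℤ) × ℤ` and `(C_25 ⋊_{ρ_11} ℤ) × ℤ` are isomorphic. -/
theorem semidirect_times_Z_iso :
    Nonempty ((cyclicSemidirect 6 (by decide)) × Multiplicative ℤ ≃*
      (cyclicSemidirect 11 (by decide)) × Multiplicative ℤ) := by
  refine ⟨⟨⟨fun p => (⟨p.1.left, p.1.right^3 * p.2^5⟩, p.1.right * p.2^2),
    fun p => (⟨p.1.left, p.1.right^2 * p.2^(-5:ℤ)⟩, p.1.right⁻¹ * p.2^3),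
    ?_, ?_⟩, ?_⟩⟩
  · intro ⟨⟨x, s⟩, u⟩
    refine Prod.ext (SemidirectProduct.ext rfl ?_) ?_ <;>
      · show _ = _
        apply Multiplicative.toAdd.injective
        simp only [toAdd_mul, toAdd_pow, toAdd_zpow, toAdd_inv, nsmul_eq_mul, zsmul_eq_mul]
        ring
  · intro ⟨⟨x, s⟩, u⟩
    refine Prod.ext (SemidirectProduct.ext rfl ?_) ?_ <;>
      · show _ = _
        apply Multiplicative.toAdd.injective
        simp only [toAdd_mul, toAdd_pow, toAdd_zpow, toAdd_inv, nsmul_eq_mul, zsmul_eq_mul]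
        ring
  · intro ⟨⟨x, s⟩, u⟩ ⟨⟨y, t⟩, v⟩
    refine Prod.ext (SemidirectProduct.ext ?_ ?_) ?_
    · show x * zpowersHom _ (powAut 6 (by decide)) s y
        = x * zpowersHom _ (powAut 11 (by decide)) (s^3 * u^5) y
      rw [key]
    · show (s * t)^3 * (u * v)^5 = (s^3 * u^5) * (t^3 * v^5)
      apply Multiplicative.toAdd.injective
      simp only [toAdd_mul, toAdd_pow, nsmul_eq_mul]
      ring
    · show (s * t) * (u * v)^2 = (s * u^2) * (t * v^2)
      apply Multiplicative.toAdd.injective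
      simp only [toAdd_mul, toAdd_pow, nsmul_eq_mul]
      ring
end

section
/- The groups C_25 ⋊_{ρ_6} Z and C_25 ⋊_{ρ_11} Z are not isomorphic. -/
open SemidirectProduct Multiplicative

lemma pa6 : ∀ x : Multiplicative (ZMod 25), powAut 6 (by decide) x = x ^ 6 := by decide
lemma pa11 : ∀ x : Multiplicative (ZMod 25), powAut 11 (by decide) x = x ^ 11 := by decide

lemma tf {a : Multiplicative ℤ} (h : IsOfFinOrder a) : a = 1 := by
  obtain ⟨n, hn, h1⟩ := (isOfFinOrder_iff_pow_eq_one).1 h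
  have h2 : (n : ℤ) • a.toAdd = 0 := by
    have := congrArg Multiplicative.toAdd h1
    simpa using this
  have : a.toAdd = 0 := by
    simp only [smul_eq_mul] at h2
    rcases mul_eq_zero.1 h2 with h | h
    · omega
    · exact h
  exact toAdd_eq_zero.1 this

lemma fin_inl (m : ℕ) (hm : Nat.Coprime m 25) (x : Multiplicative (ZMod 25)) :
    IsOfFinOrder (inl x : cyclicSemidirect m hm) :=
  (inl : _ →* cyclicSemidirect m hm).isOfFinOrder (isOfFinOrder_of_finite x)

lemma fin_eq_inl {m : ℕ} {hm : Nat.Coprime m 25} {g : cyclicSemidirect m hm}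
    (h : IsOfFinOrder g) : g = inl g.left := by
  have hr : g.right = 1 := tf ((rightHom : cyclicSemidirect m hm →* _).isOfFinOrder h)
  ext <;> simp [hr]

lemma conj_inl {m : ℕ} {hm : Nat.Coprime m 25} (h : cyclicSemidirect m hm)
    (y : Multiplicative (ZMod 25)) :
    h * inl y * h⁻¹ = inl ((powAut m hm ^ h.right.toAdd) y) := by
  ext
  · simp [mul_left, mul_right, inv_left, inv_right, zpowersHom_apply, map_inv,
      mul_comm, mul_left_comm, MulAut.apply_inv_self]
  · simp [mul_right, inv_right]

/-- `C_25 ⋊_{ρ_6} ℤ` and `C_25 ⋊_{ρ_11} ℤ` are not isomorphic. -/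
theorem semidirect_not_iso :
    IsEmpty ((cyclicSemidirect 6 (by decide)) ≃* (cyclicSemidirect 11 (by decide))) := by
  constructor
  intro φ
  set e := φ (inr (ofAdd 1)) with he
  set k : ℤ := e.right.toAdd with hk
  obtain ⟨x0, hx0⟩ : ∃ x0, φ (inl x0) = inl (ofAdd (1 : ZMod 25)) := by
    refine ⟨(φ.symm (inl (ofAdd 1))).left, ?_⟩
    have hfin : IsOfFinOrder (φ.symm (inl (ofAdd (1 : ZMod 25)))) :=
      φ.symm.toMonoidHom.isOfFinOrder (fin_inl _ _ _)
    rw [← fin_eq_inl hfin]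
    simp
  have hku : IsUnit k := by
    set g := φ.symm (inr (ofAdd (1:ℤ))) with hg
    set n : ℤ := g.right.toAdd with hn
    have hgr : g.right = ofAdd n := by simp [hn]
    have h2 : φ (inr g.right) = e ^ n := by
      rw [hgr, show (ofAdd n : Multiplicative ℤ) = (ofAdd (1:ℤ)) ^ n by
        simp [← ofAdd_zsmul], map_zpow, map_zpow, he]
    have h3 : φ (inl g.left) = inl ((φ (inl g.left)).left) :=
      fin_eq_inl (φ.toMonoidHom.isOfFinOrder (fin_inl _ _ _))
    have h4 : (inr (ofAdd (1:ℤ)) : cyclicSemidirect 11 (by decide)) = φ (inl g.left) * e ^ n := by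
      rw [← h2, ← map_mul, inl_left_mul_inr_right, hg]
      exact (φ.apply_symm_apply _).symm
    have h5 : (ofAdd (1:ℤ)) = (rightHom e) ^ n := by
      have h5' := congrArg rightHom h4
      rwa [rightHom_inr, map_mul, h3, rightHom_inl, one_mul, map_zpow] at h5'
    have hre : rightHom e = e.right := rfl
    rw [hre] at h5
    have h6 := congrArg Multiplicative.toAdd h5
    rw [toAdd_ofAdd, toAdd_zpow, smul_eq_mul, ← hk] at h6
    exact IsUnit.of_mul_eq_one (a := k) n (by rw [mul_comm]; exact h6.symm)
  -- conjugation relation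
  have hconj : (inr (ofAdd (1:ℤ)) : cyclicSemidirect 6 (by decide)) * inl x0 *
      (inr (ofAdd (1:ℤ)))⁻¹ = inl x0 ^ 6 := by
    rw [conj_inl, right_inr, toAdd_ofAdd, zpow_one, pa6, map_pow]
  have key := congrArg φ hconj
  rw [map_mul, map_mul, map_inv, hx0, ← he, conj_inl, ← hk, map_pow, hx0, ← map_pow] at key
  have keq := inl_injective key
  rcases Int.isUnit_iff.1 hku with h | h <;> rw [h] at keq
  · rw [zpow_one, pa11] at keq
    exact absurd keq (by decide)
  · rw [zpow_neg_one] at keq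
    have h2 := congrArg (powAut 11 (by decide)) keq
    rw [MulAut.apply_inv_self, pa11] at h2
    exact absurd h2 (by decide)
end

section
/- Let M be a finite group all of whose automorphisms are inner, and let H_1 = M × Z. If H_2 is any group with H_1 × Z ≅ H_2 × Z, then H_1 ≅ H_2. -/
lemma multZ_eq_one_of_finOrder {x : Multiplicative ℤ} (h : IsOfFinOrder x) : x = 1 := by
  obtain ⟨n, hn, hx⟩ := isOfFinOrder_iff_pow_eq_one.1 h
  have : (n : ℤ) • x.toAdd = 0 := by
    have := congrArg Multiplicative.toAdd hx
    simpa using this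
  have hx0 : x.toAdd = 0 := by
    rcases smul_eq_zero.mp this with h | h
    · omega
    · exact h
  have := congrArg Multiplicative.ofAdd hx0
  simpa using this

lemma multZ_zpow_eq_one {x : Multiplicative ℤ} {k : ℤ} (hk : k ≠ 0) (h : x ^ k = 1) : x = 1 := by
  have : k • x.toAdd = 0 := by
    have := congrArg Multiplicative.toAdd h
    simpa using this
  rcases smul_eq_zero.mp this with h | h
  · exact absurd h hk
  · have := congrArg Multiplicative.ofAdd h
    simpa using this

lemma equiv_finOrder_iff {G H : Type*} [Group G] [Group H] (f : G ≃* H) (x : G) :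
    IsOfFinOrder (f x) ↔ IsOfFinOrder x := by
  constructor
  · intro h
    have := f.symm.toMonoidHom.isOfFinOrder h
    simpa using this
  · exact fun h => f.toMonoidHom.isOfFinOrder h

lemma prod_finOrder_iff {G H : Type*} [Group G] [Group H] (x : G × H) :
    IsOfFinOrder x ↔ IsOfFinOrder x.1 ∧ IsOfFinOrder x.2 :=
  ⟨fun h => ⟨h.fst, h.snd⟩, fun ⟨h1, h2⟩ => h1.prod_mk h2⟩


lemma prod_fst_zpow {G H : Type*} [Group G] [Group H] (w : G × H) (n : ℤ) :
    (w ^ n).1 = w.1 ^ n := rfl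

lemma prod_snd_zpow {G H : Type*} [Group G] [Group H] (w : G × H) (n : ℤ) :
    (w ^ n).2 = w.2 ^ n := rfl

lemma ZZ_eq_one {w : Multiplicative ℤ × Multiplicative ℤ}
    (h1 : w.1.toAdd = 0) (h2 : w.2.toAdd = 0) : w = 1 := by
  have : w = (w.1, w.2) := rfl
  rw [this, Prod.mk_eq_one]
  exact ⟨toAdd_eq_zero.mp h1, toAdd_eq_zero.mp h2⟩

abbrev Zm := Multiplicative ℤ

/-- If `M` is a finite group all of whose automorphisms are inner and `H₁ = M × ℤ`,
then `H₁ × ℤ ≅ H₂ × ℤ` implies `H₁ ≅ H₂`. -/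
theorem cancel_Z_factor {M : Type*} [Group M] [Finite M]
    (hinn : ∀ f : MulAut M, ∃ m : M, ∀ x : M, f x = m * x * m⁻¹)
    (H₂ : Type*) [Group H₂]
    (hiso : Nonempty ((M × Multiplicative ℤ) × Multiplicative ℤ ≃* H₂ × Multiplicative ℤ)) :
    Nonempty (M × Multiplicative ℤ ≃* H₂) := by
  obtain ⟨φ⟩ := hiso
  -- the projection killing M
  set q : (M × Zm) × Zm →* Zm × Zm :=
    ((MonoidHom.snd M Zm).comp (MonoidHom.fst (M × Zm) Zm)).prod (MonoidHom.snd (M × Zm) Zm) with hq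
  have hq_apply : ∀ x : (M × Zm) × Zm, q x = (x.1.2, x.2) := fun x => rfl
  set p : H₂ × Zm →* Zm × Zm := q.comp φ.symm.toMonoidHom with hpdef
  set g : H₂ →* Zm × Zm := p.comp (MonoidHom.inl H₂ Zm) with hgdef
  set v : Zm × Zm := p (1, Multiplicative.ofAdd 1) with hvdef
  -- torsion characterizations
  have tor1 : ∀ x : (M × Zm) × Zm, IsOfFinOrder x ↔ q x = 1 := by
    intro x
    rw [prod_finOrder_iff, prod_finOrder_iff]
    constructor
    · rintro ⟨⟨-, h2⟩, h3⟩
      rw [hq_apply, Prod.ext_iff]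
      exact ⟨multZ_eq_one_of_finOrder h2, multZ_eq_one_of_finOrder h3⟩
    · intro h
      rw [hq_apply] at h
      have h1 : x.1.2 = 1 := by simpa using congrArg Prod.fst h
      have h2 : x.2 = 1 := by simpa using congrArg Prod.snd h
      exact ⟨⟨isOfFinOrder_of_finite _, h1 ▸ IsOfFinOrder.one⟩, h2 ▸ IsOfFinOrder.one⟩
  have tor2 : ∀ x : H₂ × Zm, IsOfFinOrder x ↔ p x = 1 := by
    intro x
    rw [← equiv_finOrder_iff φ.symm x, tor1]
    rfl
  have hp_eq : ∀ (h : H₂) (n : ℤ), p (h, Multiplicative.ofAdd n) = g h * v ^ n := by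
    intro h n
    have : (h, Multiplicative.ofAdd n) = (h, (1:Zm)) * ((1:H₂), Multiplicative.ofAdd 1) ^ n := by
      rw [Prod.ext_iff]
      constructor
      · simp
      · show Multiplicative.ofAdd n = 1 * (Multiplicative.ofAdd 1) ^ n
        rw [← ofAdd_zsmul]
        congr 1
        simp
    rw [this, map_mul, map_zpow]
    rfl
  have hg_one : ∀ h : H₂, g h = 1 ↔ IsOfFinOrder h := by
    intro h
    have : g h = p (h, 1) := rfl
    rw [this, ← tor2, prod_finOrder_iff]
    simp
  have hindep : ∀ (h : H₂) (n : ℤ), g h * v ^ n = 1 → n = 0 ∧ g h = 1 := by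
    intro h n hn
    rw [← hp_eq, ← tor2, prod_finOrder_iff] at hn
    have h2 := multZ_eq_one_of_finOrder hn.2
    have hn0 : n = 0 := by simpa using congrArg Multiplicative.toAdd h2
    subst hn0
    exact ⟨rfl, (hg_one h).mpr hn.1⟩
  have hsurj : ∀ w : Zm × Zm, ∃ (h : H₂) (n : ℤ), g h * v ^ n = w := by
    intro w
    refine ⟨(φ ((1, w.1), w.2)).1, (φ ((1, w.1), w.2)).2.toAdd, ?_⟩
    rw [← hp_eq]
    have h1 : ((φ ((1, w.1), w.2)).1, Multiplicative.ofAdd (φ ((1, w.1), w.2)).2.toAdd)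
        = φ ((1, w.1), w.2) := by simp
    rw [h1, hpdef]
    show q (φ.symm (φ ((1, w.1), w.2))) = w
    rw [φ.symm_apply_apply, hq_apply]
  have hv_ne : v ≠ 1 := by
    intro hv
    have h1 : g 1 * v ^ (1:ℤ) = 1 := by rw [map_one, hv]; simp
    exact one_ne_zero (hindep 1 1 h1).1
  set v1 : ℤ := v.1.toAdd with hv1
  set v2 : ℤ := v.2.toAdd with hv2
  set cross : Zm × Zm → ℤ := fun w => v2 * w.1.toAdd - v1 * w.2.toAdd with hcrossdef
  have cross_mul : ∀ w w' : Zm × Zm, cross (w * w') = cross w + cross w' := by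
    intro w w'
    simp only [hcrossdef, Prod.fst_mul, Prod.snd_mul, toAdd_mul]
    ring
  have cross_zpow : ∀ (w : Zm × Zm) (n : ℤ), cross (w ^ n) = n * cross w := by
    intro w n
    simp only [hcrossdef, prod_fst_zpow, prod_snd_zpow, toAdd_zpow, smul_eq_mul]
    ring
  have cross_v : cross v = 0 := by simp only [hcrossdef]; ring
  set π : H₂ →* Zm := MonoidHom.mk' (fun h => Multiplicative.ofAdd (cross (g h)))
    (by intro a b; simp only [map_mul, cross_mul, ofAdd_add]) with hπdef
  have hπ_apply : ∀ h : H₂, π h = Multiplicative.ofAdd (cross (g h)) := fun _ => rfl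
  have hkerπ : ∀ h : H₂, π h = 1 ↔ g h = 1 := by
    intro h
    constructor
    · intro hh
      have hc : cross (g h) = 0 := by
        rw [hπ_apply] at hh; exact congrArg Multiplicative.toAdd hh
      set x1 : ℤ := (g h).1.toAdd with hx1
      set x2 : ℤ := (g h).2.toAdd with hx2
      have hx : v2 * x1 - v1 * x2 = 0 := hc
      have key : ∀ k c : ℤ, (g h).1.toAdd * k = c * v1 → (g h).2.toAdd * k = c * v2 →
          (g h) ^ k = v ^ c := by
        intro k c e1 e2
        have : (g h) ^ k * v ^ (-c) = 1 := by
          apply ZZ_eq_one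
          · rw [Prod.fst_mul, toAdd_mul, prod_fst_zpow, prod_fst_zpow, toAdd_zpow, toAdd_zpow]
            simp only [smul_eq_mul, ← hv1]
            rw [mul_comm] at e1
            linarith [e1]
          · rw [Prod.snd_mul, toAdd_mul, prod_snd_zpow, prod_snd_zpow, toAdd_zpow, toAdd_zpow]
            simp only [smul_eq_mul, ← hv2]
            rw [mul_comm] at e2
            linarith [e2]
        have := mul_eq_one_iff_eq_inv.mp this
        rw [this, ← zpow_neg, neg_neg]
      have e1 : (g h) ^ v1 = v ^ x1 := by
        apply key
        · rw [← hx1]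
        · rw [← hx2]; nlinarith [hx]
      have e2 : (g h) ^ v2 = v ^ x2 := by
        apply key
        · rw [← hx1]; nlinarith [hx]
        · rw [← hx2]
      have hgv1 : g (h ^ v1) * v ^ (-x1) = 1 := by
        rw [map_zpow, e1, ← zpow_add]; simp
      have hgv2 : g (h ^ v2) * v ^ (-x2) = 1 := by
        rw [map_zpow, e2, ← zpow_add]; simp
      have k1 : (g h) ^ v1 = 1 := by rw [← map_zpow]; exact (hindep _ _ hgv1).2
      have k2 : (g h) ^ v2 = 1 := by rw [← map_zpow]; exact (hindep _ _ hgv2).2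
      have hvne : v1 ≠ 0 ∨ v2 ≠ 0 := by
        by_contra hcon
        push_neg at hcon
        exact hv_ne (ZZ_eq_one hcon.1 hcon.2)
      rcases hvne with hv0 | hv0
      · have c1 : (g h).1 ^ v1 = 1 := by rw [← prod_fst_zpow, k1]; rfl
        have c2 : (g h).2 ^ v1 = 1 := by rw [← prod_snd_zpow, k1]; rfl
        exact ZZ_eq_one (by simpa using multZ_zpow_eq_one hv0 c1)
          (by simpa using multZ_zpow_eq_one hv0 c2)
      · have c1 : (g h).1 ^ v2 = 1 := by rw [← prod_fst_zpow, k2]; rfl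
        have c2 : (g h).2 ^ v2 = 1 := by rw [← prod_snd_zpow, k2]; rfl
        exact ZZ_eq_one (by simpa using multZ_zpow_eq_one hv0 c1)
          (by simpa using multZ_zpow_eq_one hv0 c2)
    · intro hh
      rw [hπ_apply, hh]
      simp [hcrossdef]
  have cross_g : ∀ (h : H₂) (n : ℤ) (w : Zm × Zm), g h * v ^ n = w →
      π h = Multiplicative.ofAdd (cross w) := by
    intro h n w hw
    rw [hπ_apply]
    congr 1
    have h1 : cross (g h * v ^ n) = cross (g h) + n * cross v := by rw [cross_mul, cross_zpow]
    rw [← hw, h1, cross_v]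
    ring
  have hv2_mem : ∃ h : H₂, π h = Multiplicative.ofAdd v2 := by
    obtain ⟨h, n, hw⟩ := hsurj (Multiplicative.ofAdd 1, 1)
    refine ⟨h, ?_⟩
    rw [cross_g h n _ hw]
    congr 1
    simp [hcrossdef]
  have hv1_mem : ∃ h : H₂, π h = Multiplicative.ofAdd (-v1) := by
    obtain ⟨h, n, hw⟩ := hsurj (1, Multiplicative.ofAdd 1)
    refine ⟨h, ?_⟩
    rw [cross_g h n _ hw]
    congr 1
    simp [hcrossdef]
  obtain ⟨c, hc⟩ := Int.subgroup_cyclic (Subgroup.toAddSubgroup' π.range)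
  have hmemR : ∀ x : ℤ, (x ∈ Subgroup.toAddSubgroup' π.range ↔
      ∃ h : H₂, π h = Multiplicative.ofAdd x) := by
    intro x
    constructor
    · intro hx
      obtain ⟨h, hh⟩ := hx
      exact ⟨h, hh⟩
    · rintro ⟨h, hh⟩
      exact ⟨h, hh⟩
  have hc_mem : ∀ x : ℤ, (∃ h : H₂, π h = Multiplicative.ofAdd x) ↔ ∃ n : ℤ, n • c = x := by
    intro x
    rw [← hmemR, hc, AddSubgroup.mem_closure_singleton]
  have hc_ne : c ≠ 0 := by
    intro h0
    subst h0
    have e1 : v1 = 0 := by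
      obtain ⟨n, hn⟩ := (hc_mem (-v1)).mp hv1_mem
      simp at hn
      omega
    have e2 : v2 = 0 := by
      obtain ⟨n, hn⟩ := (hc_mem v2).mp hv2_mem
      simp at hn
      omega
    exact hv_ne (ZZ_eq_one e1 e2)
  obtain ⟨z, hz⟩ := (hc_mem c).mpr ⟨1, one_smul _ _⟩
  have hrange : ∀ h : H₂, ∃ n : ℤ, π h = Multiplicative.ofAdd (n * c) := by
    intro h
    obtain ⟨n, hn⟩ := (hc_mem (π h).toAdd).mp ⟨h, by simp⟩
    rw [smul_eq_mul] at hn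
    exact ⟨n, by rw [hn]; simp⟩
  -- the embedding of M into H₂
  set j : M →* H₂ := (MonoidHom.fst H₂ Zm).comp (φ.toMonoidHom.comp
    ((MonoidHom.inl (M × Zm) Zm).comp (MonoidHom.inl M Zm))) with hjdef
  have hφm : ∀ m : M, φ ((m, 1), 1) = (j m, 1) := by
    intro m
    have hfin : IsOfFinOrder (φ ((m, 1), 1)) := by
      rw [equiv_finOrder_iff, tor1, hq_apply]
      rfl
    have h2 : (φ ((m, 1), 1)).2 = 1 := multZ_eq_one_of_finOrder hfin.snd
    have h3 : φ ((m,1),1) = ((φ ((m,1),1)).1, (φ ((m,1),1)).2) := rfl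
    rw [h3, h2]
    rfl
  have hjinj : Function.Injective j := by
    intro m m' hmm
    have h1 : φ ((m,1),1) = φ ((m',1),1) := by rw [hφm, hφm, hmm]
    have h2 := φ.injective h1
    simpa using congrArg (fun x => x.1.1) h2
  have hgj : ∀ m : M, g (j m) = 1 := by
    intro m
    show p (j m, 1) = 1
    have h1 : ((j m : H₂), (1 : Zm)) = φ ((m,1),1) := (hφm m).symm
    rw [h1, hpdef]
    show q (φ.symm (φ _)) = 1
    rw [φ.symm_apply_apply, hq_apply]
    rfl
  have hjsurj : ∀ h : H₂, g h = 1 → ∃ m, j m = h := by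
    intro h hh
    have h1 : q (φ.symm (h, 1)) = 1 := hh
    rw [hq_apply] at h1
    have e1 : (φ.symm (h,1)).1.2 = 1 := by simpa using congrArg Prod.fst h1
    have e2 : (φ.symm (h,1)).2 = 1 := by simpa using congrArg Prod.snd h1
    refine ⟨(φ.symm (h,1)).1.1, ?_⟩
    have h3 : φ.symm (h, 1) = (((φ.symm (h,1)).1.1, (1:Zm)), (1:Zm)) :=
      Prod.ext (Prod.ext rfl e1) e2
    have h4 := congrArg φ h3
    rw [φ.apply_symm_apply, hφm] at h4
    simpa using (congrArg Prod.fst h4).symm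
  have hπj : ∀ m : M, π (j m) = 1 := fun m => (hkerπ _).mpr (hgj m)
  have hconj : ∀ (y : H₂) (m : M), ∃ m' : M, j m' = y * j m * y⁻¹ := by
    intro y m
    apply hjsurj
    rw [← hkerπ, map_mul, map_mul, map_inv, hπj]
    group
  choose conjM hconjM using hconj
  have hconj_mul : ∀ (y : H₂) (m m' : M),
      conjM y (m * m') = conjM y m * conjM y m' := by
    intro y m m'
    apply hjinj
    rw [map_mul, hconjM, hconjM, hconjM, map_mul]
    group
  have hconj_inv : ∀ (y : H₂) (m : M), conjM y⁻¹ (conjM y m) = m := by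
    intro y m
    apply hjinj
    rw [hconjM, hconjM]
    group
  have hconj_inv' : ∀ (y : H₂) (m : M), conjM y (conjM y⁻¹ m) = m := by
    intro y m
    apply hjinj
    rw [hconjM, hconjM]
    group
  let f : MulAut M :=
    { toFun := conjM z
      invFun := conjM z⁻¹
      left_inv := hconj_inv z
      right_inv := hconj_inv' z
      map_mul' := hconj_mul z }
  obtain ⟨m₀, hm₀⟩ := hinn f
  have hzj : ∀ x : M, z * j x * z⁻¹ = j m₀ * j x * (j m₀)⁻¹ := by
    intro x
    have h1 : j (f x) = z * j x * z⁻¹ := hconjM z x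
    rw [hm₀ x, map_mul, map_mul, map_inv] at h1
    rw [← h1]
  set u : H₂ := (j m₀)⁻¹ * z with hudef
  have hucomm : ∀ x : M, u * j x = j x * u := by
    intro x
    have h := hzj x
    have h1 : u * j x = (j m₀)⁻¹ * (z * j x * z⁻¹) * z := by rw [hudef]; group
    rw [h1, h, hudef]
    group
  have hπu : π u = Multiplicative.ofAdd c := by
    rw [hudef, map_mul, map_inv, hπj, hz]
    simp
  set Φ : M × Multiplicative ℤ →* H₂ := MonoidHom.mk' (fun x => j x.1 * u ^ x.2.toAdd) (by
    rintro ⟨m, a⟩ ⟨m', b⟩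
    show j (m * m') * u ^ (a * b).toAdd = (j m * u ^ a.toAdd) * (j m' * u ^ b.toAdd)
    have hc2 : u ^ a.toAdd * j m' = j m' * u ^ a.toAdd :=
      (Commute.zpow_left (hucomm m') a.toAdd).eq
    rw [toAdd_mul]
    calc j (m * m') * u ^ (a.toAdd + b.toAdd)
        = j m * (j m' * u ^ a.toAdd) * u ^ b.toAdd := by rw [map_mul, zpow_add]; group
      _ = j m * (u ^ a.toAdd * j m') * u ^ b.toAdd := by rw [hc2]
      _ = (j m * u ^ a.toAdd) * (j m' * u ^ b.toAdd) := by group) with hΦdef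
  have hΦ_apply : ∀ (m : M) (a : Multiplicative ℤ), Φ (m, a) = j m * u ^ a.toAdd :=
    fun _ _ => rfl
  have hΦinj : Function.Injective Φ := by
    rw [injective_iff_map_eq_one]
    rintro ⟨m, a⟩ hma
    rw [hΦ_apply] at hma
    have h1 : π (j m * u ^ a.toAdd) = 1 := by rw [hma, map_one]
    rw [map_mul, hπj, map_zpow, hπu, one_mul] at h1
    have h2 : a.toAdd • (c : ℤ) = 0 := by simpa using congrArg Multiplicative.toAdd h1
    have ha : a.toAdd = 0 := by
      rcases smul_eq_zero.mp h2 with h | h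
      · exact h
      · exact absurd h hc_ne
    have ha1 : a = 1 := toAdd_eq_zero.mp ha
    subst ha1
    have hm1 : j m = 1 := by simpa using hma
    exact Prod.mk_eq_one.mpr ⟨hjinj (by rw [hm1, map_one]), rfl⟩
  have hΦsurj : Function.Surjective Φ := by
    intro h
    obtain ⟨n, hn⟩ := hrange h
    have h1 : π (h * u ^ (-n)) = 1 := by
      rw [map_mul, map_zpow, hπu, hn]
      have : (Multiplicative.ofAdd c) ^ (-n) = Multiplicative.ofAdd (-(n * c)) := by
        rw [← ofAdd_zsmul]
        congr 1
        rw [smul_eq_mul]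
        ring
      rw [this, ← ofAdd_add]
      simp
    obtain ⟨m, hm⟩ := hjsurj _ ((hkerπ _).mp h1)
    refine ⟨(m, Multiplicative.ofAdd n), ?_⟩
    rw [hΦ_apply, hm]
    simp only [toAdd_ofAdd]
    group
  exact ⟨MulEquiv.ofBijective Φ ⟨hΦinj, hΦsurj⟩⟩
end
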